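/- Let 𝒜 ⊆ ℕ be an OR₊ sequence. Then for every integer h ≥ 2, ∑ over all tuples 0 ≤ k₁ < k₂ < ⋯ < k_h with k₁+⋯+k_h = n of the product ∏_{i=1}^{h} A(kᵢ)/(kᵢ+1) is Θ(A(n)^h / n) as n → ∞. -/

import Mathlib

open Filter Asymptotics MeasureTheory
noncomputable def cntA (A : Set ℕ) (x : ℝ) : ℕ :=
  {n : ℕ | n ∈ A ∧ (n : ℝ) ≤ x}.ncard

noncomputable def seqA (A : Set ℕ) (n : ℕ) : ℕ := Nat.nth (· ∈ A) n

open scoped Classical in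
lemma cntA_eq_count (A : Set ℕ) (x : ℝ) (hx : 0 ≤ x) :
    cntA A x = Nat.count (· ∈ A) (⌊x⌋₊ + 1) := by
  classical
  rw [cntA, Nat.count_eq_card_filter_range]
  rw [← Set.ncard_coe_finset]
  congr 1
  ext n
  simp only [Finset.coe_filter, Finset.mem_range, Set.mem_setOf_eq, Nat.lt_succ_iff]
  rw [Nat.le_floor_iff hx]
  tauto

lemma cntA_mono (A : Set ℕ) : Monotone (cntA A) := by
  intro x y hxy
  rcases lt_or_ge x 0 with hx | hx
  · have : {n : ℕ | n ∈ A ∧ (n : ℝ) ≤ x} = ∅ := by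
      ext n; simp only [Set.mem_setOf_eq, Set.mem_empty_iff_false, iff_false]
      rintro ⟨-, hn⟩; exact absurd (hn.trans_lt hx) (by exact_mod_cast (Nat.cast_nonneg n).not_gt)
    simp [cntA, this]
  · classical
    rw [cntA_eq_count A x hx, cntA_eq_count A y (hx.trans hxy)]
    exact Nat.count_monotone _ (by have := Nat.floor_le_floor hxy; omega)

section Infinite
variable {A : Set ℕ}
variable (hI : A.Infinite)
include hI

lemma cntA_seqA (m : ℕ) : cntA A (seqA A m) = m + 1 := by
  classical
  rw [cntA_eq_count A _ (Nat.cast_nonneg _), Nat.floor_natCast, seqA]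
  exact Nat.count_nth_succ_of_infinite (p := (· ∈ A)) hI m

omit hI in
lemma seqA_le_of_lt_cntA {x : ℝ} {k : ℕ} (hk : k < cntA A x) : (seqA A k : ℝ) ≤ x := by
  classical
  rcases lt_or_ge x 0 with hx | hx
  · exfalso
    have : {n : ℕ | n ∈ A ∧ (n : ℝ) ≤ x} = ∅ := by
      ext n; simp only [Set.mem_setOf_eq, Set.mem_empty_iff_false, iff_false]
      rintro ⟨-, hn⟩; exact absurd (hn.trans_lt hx) (by exact_mod_cast (Nat.cast_nonneg n).not_gt)
    rw [cntA, this] at hk; simp at hk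
  · rw [cntA_eq_count A x hx] at hk
    have h2 : seqA A k < ⌊x⌋₊ + 1 := Nat.nth_lt_of_lt_count hk
    have : (seqA A k : ℝ) ≤ (⌊x⌋₊ : ℝ) := by exact_mod_cast Nat.lt_succ_iff.mp h2
    exact this.trans (Nat.floor_le hx)

lemma le_cntA {x : ℝ} {m : ℕ} (hm : (seqA A m : ℝ) ≤ x) : m + 1 ≤ cntA A x := by
  calc m + 1 = cntA A (seqA A m) := (cntA_seqA hI m).symm
  _ ≤ cntA A x := cntA_mono A hm

lemma cntA_tendsto : Tendsto (fun x : ℝ => cntA A x) atTop atTop := by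
  rw [tendsto_atTop]
  intro b
  filter_upwards [eventually_ge_atTop (seqA A b : ℝ)] with x hx
  exact (le_cntA hI hx).trans' (by omega)

lemma cntA_tendsto_nat : Tendsto (fun n : ℕ => cntA A n) atTop atTop :=
  (cntA_tendsto hI).comp tendsto_natCast_atTop_atTop

lemma cntA_pos {x : ℝ} (hx : (seqA A 0 : ℝ) ≤ x) : 1 ≤ cntA A x := le_cntA hI hx

end Infinite

def ORseq (A : Set ℕ) : Prop :=
  (fun x : ℝ => (cntA A (2 * x) : ℝ)) =O[atTop] (fun x : ℝ => (cntA A x : ℝ))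

def PIseq (A : Set ℕ) : Prop :=
  (fun n : ℕ => (seqA A (2 * n) : ℝ)) =O[atTop] (fun n : ℕ => (seqA A n : ℝ))

section OR
variable {A : Set ℕ}

/-- concrete OR bound -/
lemma or_concrete (hOR : ORseq A) :
    ∃ C : ℝ, 1 ≤ C ∧ ∃ x₀ : ℝ, 1 ≤ x₀ ∧ ∀ x ≥ x₀, (cntA A (2 * x) : ℝ) ≤ C * cntA A x := by
  rw [ORseq, isBigO_iff] at hOR
  obtain ⟨c, hc⟩ := hOR
  rw [eventually_atTop] at hc
  obtain ⟨x₀, hx₀⟩ := hc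
  refine ⟨max c 1, le_max_right _ _, max x₀ 1, le_max_right _ _, fun x hx => ?_⟩
  have := hx₀ x (le_trans (le_max_left _ _) hx)
  rw [Real.norm_eq_abs, Real.norm_eq_abs, abs_of_nonneg (by positivity),
    abs_of_nonneg (by positivity)] at this
  exact this.trans (mul_le_mul_of_nonneg_right (le_max_left _ _) (by positivity))

lemma or_iter (hOR : ORseq A) :
    ∃ C : ℝ, 1 ≤ C ∧ ∃ x₀ : ℝ, 1 ≤ x₀ ∧ ∀ j : ℕ, ∀ x ≥ x₀,
      (cntA A (2 ^ j * x) : ℝ) ≤ C ^ j * cntA A x := by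
  obtain ⟨C, hC, x₀, hx₀, H⟩ := or_concrete hOR
  refine ⟨C, hC, x₀, hx₀, fun j => ?_⟩
  induction j with
  | zero => intro x _; simp
  | succ j ih =>
    intro x hx
    have hx1 : (1:ℝ) ≤ x := hx₀.trans hx
    have h2x : 2 ^ j * x ≥ x₀ := by nlinarith [one_le_pow₀ (by norm_num : (1:ℝ) ≤ 2) (n := j)]
    calc (cntA A (2 ^ (j+1) * x) : ℝ) = cntA A (2 * (2 ^ j * x)) := by ring_nf
    _ ≤ C * cntA A (2 ^ j * x) := H _ h2x
    _ ≤ C * (C ^ j * cntA A x) := mul_le_mul_of_nonneg_left (ih x hx) (by linarith)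
    _ = C ^ (j+1) * cntA A x := by ring

/-- For any natural scale factor c ≥ 1: A(n) ≤ C₂ A(n/c) for n large. -/
lemma or_scale (hOR : ORseq A) (c : ℕ) (hc : 1 ≤ c) :
    ∃ C₂ : ℝ, 1 ≤ C₂ ∧ ∃ N₂ : ℕ, ∀ n ≥ N₂, (cntA A n : ℝ) ≤ C₂ * cntA A (n / c : ℕ) := by
  obtain ⟨C, hC, x₀, hx₀, H⟩ := or_iter hOR
  obtain ⟨j, hj⟩ : ∃ j : ℕ, (2 * c : ℝ) ≤ 2 ^ j := pow_unbounded_of_one_lt _ one_lt_two |>.imp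
    (fun j hj => hj.le) |> Exists.imp (fun _ h => h)
  refine ⟨C ^ j, one_le_pow₀ hC, c * (⌈x₀⌉₊ + 1), fun n hn => ?_⟩
  set q := n / c with hq
  have hq1 : (⌈x₀⌉₊ + 1 : ℕ) ≤ q := Nat.le_div_iff_mul_le (by omega) |>.mpr (by nlinarith)
  have hqx : (q : ℝ) ≥ x₀ := le_trans (Nat.le_ceil x₀) (by exact_mod_cast by omega)
  have hn2 : (n : ℝ) ≤ 2 ^ j * q := by
    have h1 : n < c * (q + 1) := Nat.lt_mul_div_succ n (by omega)
    have h2 : (n : ℝ) < c * (q + 1) := by exact_mod_cast h1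
    have hq0 : (1:ℝ) ≤ q := by exact_mod_cast by omega
    nlinarith
  calc (cntA A n : ℝ) ≤ (cntA A (2 ^ j * q) : ℝ) := by exact_mod_cast cntA_mono A hn2
  _ ≤ C ^ j * cntA A q := H j q hqx

end OR

section PI
variable {A : Set ℕ} (hI : A.Infinite)
include hI

omit hI in
lemma pi_concrete (hPI : PIseq A) :
    ∃ D : ℝ, 1 ≤ D ∧ ∃ n₁ : ℕ, ∀ m ≥ n₁, (seqA A (2 * m) : ℝ) ≤ D * seqA A m := by
  rw [PIseq, isBigO_iff] at hPI
  obtain ⟨c, hc⟩ := hPI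
  rw [eventually_atTop] at hc
  obtain ⟨n₁, hn₁⟩ := hc
  refine ⟨max c 1, le_max_right _ _, n₁, fun m hm => ?_⟩
  have := hn₁ m hm
  rw [Real.norm_eq_abs, Real.norm_eq_abs, abs_of_nonneg (by positivity),
    abs_of_nonneg (by positivity)] at this
  exact this.trans (mul_le_mul_of_nonneg_right (le_max_left _ _) (by positivity))

/-- single-step: 2*A(x) ≤ A(D*x) + 1 for large x -/
lemma pi_step (hPI : PIseq A) :
    ∃ D : ℝ, 1 ≤ D ∧ ∃ x₁ : ℝ, 1 ≤ x₁ ∧ ∀ x ≥ x₁, 2 * cntA A x ≤ cntA A (D * x) + 1 := by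
  obtain ⟨D, hD, n₁, H⟩ := pi_concrete hPI
  refine ⟨D, hD, max (seqA A n₁) 1, le_max_right _ _, fun x hx => ?_⟩
  have hx0 : (0:ℝ) ≤ x := le_trans (by norm_num) (le_trans (le_max_right _ _) hx)
  have hxa : (seqA A n₁ : ℝ) ≤ x := le_trans (le_max_left _ _) hx
  have h1 : n₁ + 1 ≤ cntA A x := le_cntA hI hxa
  set m := cntA A x - 1 with hm
  have hm1 : cntA A x = m + 1 := by omega
  have hmn : n₁ ≤ m := by omega
  have ham : (seqA A m : ℝ) ≤ x := seqA_le_of_lt_cntA (by omega)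
  have h2m : (seqA A (2 * m) : ℝ) ≤ D * x := by
    calc (seqA A (2 * m) : ℝ) ≤ D * seqA A m := H m hmn
    _ ≤ D * x := mul_le_mul_of_nonneg_left ham (by linarith)
  have := le_cntA hI h2m
  omega

/-- doubling: 2*A(x) ≤ A(E*x) for large x -/
lemma pi_double (hPI : PIseq A) :
    ∃ E : ℝ, 1 ≤ E ∧ ∃ x₂ : ℝ, 1 ≤ x₂ ∧ ∀ x ≥ x₂, 2 * cntA A x ≤ cntA A (E * x) := by
  obtain ⟨D, hD, x₁, hx₁, H⟩ := pi_step hI hPI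
  refine ⟨D * D, by nlinarith, max x₁ (max (seqA A 1 : ℝ) 1), le_trans (by norm_num) (le_max_right _ _), fun x hx => ?_⟩
  have hxx₁ : x ≥ x₁ := le_trans (le_max_left _ _) hx
  have hx0 : (0:ℝ) ≤ x := le_trans (by norm_num) (le_trans (le_max_right _ _) hx)
  have hDx : D * x ≥ x₁ := by nlinarith
  have h1 := H x hxx₁
  have h2 := H (D * x) hDx
  rw [← mul_assoc] at h2
  have h3 : 2 ≤ cntA A x := le_cntA hI (le_trans (le_trans (le_max_left _ _) (le_max_right _ _)) hx)
  omega

/-- nat version with a nat factor F : 2*A(m) ≤ A(F*m) for m ≥ T. -/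
lemma pi_double_nat (hPI : PIseq A) :
    ∃ F : ℕ, 2 ≤ F ∧ ∃ T : ℕ, 1 ≤ T ∧ ∀ m : ℕ, T ≤ m → 2 * cntA A (m:ℝ) ≤ cntA A ((F * m : ℕ) : ℝ) := by
  obtain ⟨E, hE, x₂, hx₂, H⟩ := pi_double hI hPI
  refine ⟨max ⌈E⌉₊ 2, le_max_right _ _, max ⌈x₂⌉₊ 1, le_max_right _ _, fun m hm => ?_⟩
  have hmx : (m : ℝ) ≥ x₂ := le_trans (Nat.le_ceil x₂) (by exact_mod_cast le_trans (le_max_left _ _) hm)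
  refine (H m hmx).trans (cntA_mono A ?_)
  have : E ≤ (max ⌈E⌉₊ 2 : ℕ) := le_trans (Nat.le_ceil E) (by exact_mod_cast le_max_left _ _)
  have hm0 : (0:ℝ) ≤ m := Nat.cast_nonneg m
  rw [Nat.cast_mul]
  exact mul_le_mul_of_nonneg_right this hm0

end PI

section Sum
variable {A : Set ℕ} (hI : A.Infinite)

noncomputable def SA (A : Set ℕ) (n : ℕ) : ℝ :=
  ∑ k ∈ Finset.range (n + 1), (cntA A k : ℝ) / (k + 1)

lemma SA_nonneg (n : ℕ) : 0 ≤ SA A n :=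
  Finset.sum_nonneg fun k _ => by positivity

lemma SA_mono {m n : ℕ} (hmn : m ≤ n) : SA A m ≤ SA A n :=
  Finset.sum_le_sum_of_subset_of_nonneg
    (Finset.range_subset_range.mpr (by omega)) (fun k _ _ => by positivity)

include hI in
lemma SA_le (hPI : PIseq A) :
    ∃ K : ℝ, 1 ≤ K ∧ ∀ᶠ n in atTop, SA A n ≤ K * cntA A (n : ℝ) := by
  obtain ⟨F, hF, T, hT, H⟩ := pi_double_nat hI hPI
  set C₀ : ℝ := SA A (F * (T + 1)) with hC₀
  have key : ∀ n : ℕ, SA A n ≤ 2 * F * cntA A (n : ℝ) + C₀ := by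
    intro n
    induction n using Nat.strong_induction_on with
    | _ n ih =>
      rcases le_or_gt n (F * (T + 1)) with hn | hn
      · have : SA A n ≤ C₀ := SA_mono hn
        have : (0:ℝ) ≤ 2 * F * cntA A (n : ℝ) := by positivity
        linarith [SA_mono (A := A) hn]
      · set m := n / F with hm
        have hF0 : 0 < F := by omega
        have hmT : T + 1 ≤ m := Nat.le_div_iff_mul_le hF0 |>.mpr (by rw [Nat.mul_comm] at hn; omega)
        have hmn : m < n := Nat.div_lt_self (by omega) (by omega)
        have hFm : F * m ≤ n := by rw [Nat.mul_comm]; exact Nat.div_mul_le_self n F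
        have hnF : n < F * (m + 1) := Nat.lt_mul_div_succ n hF0
        -- split sum
        have hsplit : SA A n = SA A m + ∑ k ∈ Finset.Ico (m + 1) (n + 1), (cntA A k : ℝ) / (k + 1) := by
          rw [SA, SA, Finset.range_eq_Ico, Finset.range_eq_Ico]
          exact (Finset.sum_Ico_consecutive (fun k => (cntA A k : ℝ) / (k + 1)) (by omega : 0 ≤ m + 1) (by omega : m + 1 ≤ n + 1)).symm
        -- tail bound
        have htail : ∑ k ∈ Finset.Ico (m + 1) (n + 1), (cntA A k : ℝ) / (k + 1)
            ≤ ((n + 1 - (m + 1) : ℕ) : ℝ) * ((cntA A (n : ℝ) : ℝ) / ((m:ℝ) + 2)) := by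
          have := Finset.sum_le_card_nsmul (Finset.Ico (m + 1) (n + 1))
            (fun k => (cntA A k : ℝ) / (k + 1)) ((cntA A (n : ℝ) : ℝ) / ((m:ℝ) + 2)) ?_
          · rwa [Nat.card_Ico, nsmul_eq_mul] at this
          · intro k hk
            rw [Finset.mem_Ico] at hk
            apply div_le_div₀ (by positivity)
            · exact_mod_cast cntA_mono A (by exact_mod_cast (by omega : k ≤ n))
            · positivity
            · push_cast; exact_mod_cast (by push_cast; norm_num; exact_mod_cast (by omega : m + 2 ≤ k + 1) : (m:ℝ) + 2 ≤ (k:ℝ) + 1)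
        have hcard : ((n + 1 - (m + 1) : ℕ) : ℝ) ≤ F * ((m:ℝ) + 2) := by
          have h1 : (n : ℝ) < F * ((m:ℝ) + 1) := by exact_mod_cast hnF
          have h' : (n + 1 - (m + 1) : ℕ) = n - m := by omega
          rw [h', Nat.cast_sub hmn.le]
          have hF1 : (1:ℝ) ≤ F := by exact_mod_cast by omega
          nlinarith [Nat.cast_nonneg (α := ℝ) m]
        have htail2 : ∑ k ∈ Finset.Ico (m + 1) (n + 1), (cntA A k : ℝ) / (k + 1)
            ≤ F * cntA A (n : ℝ) := by
          refine htail.trans ?_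
          rw [mul_div_assoc']
          rw [div_le_iff₀ (by positivity)]
          have h0 : (0:ℝ) ≤ cntA A (n:ℝ) := by positivity
          nlinarith
        -- A(m) ≤ A(n)/2
        have hdouble : 2 * cntA A (m : ℝ) ≤ cntA A (n : ℝ) := by
          refine (H m (by omega)).trans ?_
          exact cntA_mono A (by exact_mod_cast hFm)
        have hdR : 2 * (cntA A (m : ℝ) : ℝ) ≤ cntA A (n : ℝ) := by exact_mod_cast hdouble
        have := ih m hmn
        rw [hsplit]
        have hF1 : (1:ℝ) ≤ F := by exact_mod_cast by omega
        nlinarith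
  obtain ⟨N, hN⟩ := eventually_atTop.mp ((tendsto_atTop.mp (cntA_tendsto_nat hI)) ⌈C₀⌉₊)
  have hF1 : (1:ℝ) ≤ F := by exact_mod_cast by omega
  refine ⟨2 * F + 1, by linarith, eventually_atTop.mpr ⟨N, fun n hn => ?_⟩⟩
  have h1 := key n
  have h2 : C₀ ≤ cntA A (n : ℝ) := by
    refine le_trans (Nat.le_ceil C₀) ?_
    exact_mod_cast hN n hn
  nlinarith [Nat.cast_nonneg (α := ℝ) (cntA A (n:ℝ))]

end Sum

section Comb

lemma powersetCard_sum_prod_le (T : Finset ℕ) (f : ℕ → ℝ) (hf : ∀ k, 0 ≤ f k) :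
    ∀ m : ℕ, ∑ t ∈ T.powersetCard m, ∏ k ∈ t, f k ≤ (∑ k ∈ T, f k) ^ m := by
  classical
  induction T using Finset.induction_on with
  | empty =>
    intro m
    cases m with
    | zero => simp
    | succ m => rw [Finset.powersetCard_eq_empty.mpr (by simp)]; simp
  | insert x s hx ih =>
    intro m
    cases m with
    | zero => simp
    | succ m =>
      rw [Finset.powersetCard_succ_insert hx]
      have hdisj : Disjoint (s.powersetCard (m+1)) ((s.powersetCard m).image (insert x)) := by
        rw [Finset.disjoint_left]
        intro t ht ht'
        rw [Finset.mem_powersetCard] at ht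
        obtain ⟨u, hu, rfl⟩ := Finset.mem_image.mp ht'
        exact hx (ht.1 (Finset.mem_insert_self x u))
      rw [Finset.sum_union hdisj]
      have himg : ∑ t ∈ (s.powersetCard m).image (insert x), ∏ k ∈ t, f k
          = f x * ∑ t ∈ s.powersetCard m, ∏ k ∈ t, f k := by
        rw [Finset.sum_image, Finset.mul_sum]
        · refine Finset.sum_congr rfl fun t ht => ?_
          rw [Finset.mem_powersetCard] at ht
          rw [Finset.prod_insert (fun hxt => hx (ht.1 hxt))]
        · intro t ht u hu he
          rw [Finset.mem_coe, Finset.mem_powersetCard] at ht hu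
          have h1 : t = (insert x t).erase x := by
            rw [Finset.erase_insert (fun hxt => hx (ht.1 hxt))]
          rw [h1, he, Finset.erase_insert (fun hxu => hx (hu.1 hxu))]
      rw [himg, Finset.sum_insert hx]
      have hS : (0:ℝ) ≤ ∑ k ∈ s, f k := Finset.sum_nonneg fun k _ => hf k
      have h1 := ih (m+1)
      have h2 := ih m
      have h3 : (∑ k ∈ s, f k) ^ (m+1) + f x * (∑ k ∈ s, f k) ^ m
          ≤ (f x + ∑ k ∈ s, f k) ^ (m+1) := by
        have hp : (∑ k ∈ s, f k) ^ m ≤ (f x + ∑ k ∈ s, f k) ^ m :=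
          pow_le_pow_left₀ hS (by linarith [hf x]) m
        calc (∑ k ∈ s, f k) ^ (m+1) + f x * (∑ k ∈ s, f k) ^ m
            = (f x + ∑ k ∈ s, f k) * (∑ k ∈ s, f k) ^ m := by ring
          _ ≤ (f x + ∑ k ∈ s, f k) * (f x + ∑ k ∈ s, f k) ^ m := by
              refine mul_le_mul_of_nonneg_left hp (by linarith [hf x])
          _ = (f x + ∑ k ∈ s, f k) ^ (m+1) := by ring
      have h4 : f x * ∑ t ∈ s.powersetCard m, ∏ k ∈ t, f k ≤ f x * (∑ k ∈ s, f k) ^ m :=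
        mul_le_mul_of_nonneg_left h2 (hf x)
      linarith

end Comb

section Inj
variable {α β : Type*} [DecidableEq β]

lemma sum_le_sum_inj (s : Finset α) (t : Finset β) (e : α → β)
    (hinj : ∀ a ∈ s, ∀ a' ∈ s, e a = e a' → a = a')
    (hmap : ∀ a ∈ s, e a ∈ t) (f : α → ℝ) (g : β → ℝ)
    (hfg : ∀ a ∈ s, f a ≤ g (e a)) (hg : ∀ b ∈ t, 0 ≤ g b) :
    ∑ a ∈ s, f a ≤ ∑ b ∈ t, g b := by
  calc ∑ a ∈ s, f a ≤ ∑ a ∈ s, g (e a) := Finset.sum_le_sum hfg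
    _ = ∑ b ∈ s.image e, g b := (Finset.sum_image hinj).symm
    _ ≤ ∑ b ∈ t, g b := Finset.sum_le_sum_of_subset_of_nonneg
        (Finset.image_subset_iff.mpr hmap) (fun b hb _ => hg b hb)

end Inj

section Main
variable {A : Set ℕ} (hI : A.Infinite)

noncomputable def FA (A : Set ℕ) (k : ℕ) : ℝ := (cntA A k : ℝ) / (k + 1)

lemma FA_nonneg (k : ℕ) : 0 ≤ FA A k := by unfold FA; positivity

include hI in
lemma upper_bound (hPI : PIseq A) (h : ℕ) (hh : 2 ≤ h) :
    ∃ c : ℝ, 0 < c ∧ ∀ᶠ n in atTop,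
      ∑ s ∈ ((Finset.range (n + 1)).powersetCard h).filter (fun s => ∑ k ∈ s, k = n),
        ∏ k ∈ s, FA A k ≤ c * ((cntA A n : ℝ) ^ h / n) := by
  classical
  obtain ⟨K, hK1, hKev⟩ := SA_le hI hPI
  refine ⟨h * K ^ (h - 1), by positivity, ?_⟩
  filter_upwards [hKev, eventually_ge_atTop 1] with n hKn hn1
  set P := ((Finset.range (n + 1)).powersetCard h).filter (fun s => ∑ k ∈ s, k = n) with hP
  set e : Finset ℕ → Finset ℕ := fun s => if hs : s.Nonempty then s.erase (s.max' hs) else ∅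
  have hmem : ∀ s ∈ P, s.card = h ∧ (∑ k ∈ s, k = n) ∧ s ⊆ Finset.range (n + 1) := by
    intro s hs
    rw [hP, Finset.mem_filter, Finset.mem_powersetCard] at hs
    exact ⟨hs.1.2, hs.2, hs.1.1⟩
  have hne : ∀ s ∈ P, s.Nonempty := by
    intro s hs
    rw [← Finset.card_pos, (hmem s hs).1]; omega
  -- key per-element bound
  have hkey : ∀ s ∈ P, ∏ k ∈ s, FA A k
      ≤ (h * (cntA A n : ℝ) / n) * ∏ k ∈ e s, FA A k := by
    intro s hs
    obtain ⟨hcard, hsum, hsub⟩ := hmem s hs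
    have hsne := hne s hs
    set M := s.max' hsne with hM
    have hMs : M ∈ s := Finset.max'_mem s hsne
    have hMn : M ≤ n := by
      have := hsub hMs; rw [Finset.mem_range] at this; omega
    have hnhM : n ≤ h * M := by
      calc n = ∑ k ∈ s, k := hsum.symm
        _ ≤ ∑ _k ∈ s, M := Finset.sum_le_sum fun k hk => Finset.le_max' s k hk
        _ = h * M := by rw [Finset.sum_const, hcard, smul_eq_mul]
    have hprod : ∏ k ∈ s, FA A k = FA A M * ∏ k ∈ e s, FA A k := by
      rw [show e s = s.erase M by simp [e, dif_pos hsne, hM]]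
      exact (Finset.mul_prod_erase s _ hMs).symm
    rw [hprod]
    refine mul_le_mul_of_nonneg_right ?_ (Finset.prod_nonneg fun k _ => FA_nonneg k)
    unfold FA
    rw [div_le_div_iff₀ (by positivity) (by exact_mod_cast by omega : (0:ℝ) < n)]
    have h1 : (cntA A M : ℝ) ≤ (cntA A n : ℝ) := by
      exact_mod_cast cntA_mono A (by exact_mod_cast hMn)
    have h2 : (n : ℝ) ≤ h * ((M : ℝ) + 1) := by
      have : (n:ℝ) ≤ h * M := by exact_mod_cast hnhM
      nlinarith [Nat.cast_nonneg (α := ℝ) h]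
    have h3 : (0:ℝ) ≤ cntA A M := Nat.cast_nonneg _
    nlinarith [Nat.cast_nonneg (α := ℝ) (cntA A n)]
  -- injection into powersetCard (h-1)
  have hbound : ∑ s ∈ P, ∏ k ∈ s, FA A k
      ≤ ∑ t ∈ (Finset.range (n + 1)).powersetCard (h - 1),
          (h * (cntA A n : ℝ) / n) * ∏ k ∈ t, FA A k := by
    refine sum_le_sum_inj P _ e ?_ ?_ _ _ hkey ?_
    · intro a ha a' ha' hee
      have hna := hne a ha; have hna' := hne a' ha'
      have hea : e a = a.erase (a.max' hna) := by simp [e, dif_pos hna]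
      have hea' : e a' = a'.erase (a'.max' hna') := by simp [e, dif_pos hna']
      have hs1 : ∑ k ∈ a, k = n := ((hmem a ha).2).1
      have hs2 : ∑ k ∈ a', k = n := ((hmem a' ha').2).1
      have hr1 : a.max' hna + ∑ k ∈ e a, k = n := by
        rw [hea]; simpa [hs1] using Finset.add_sum_erase a id (Finset.max'_mem a hna)
      have hr2 : a'.max' hna' + ∑ k ∈ e a', k = n := by
        rw [hea']; simpa [hs2] using Finset.add_sum_erase a' id (Finset.max'_mem a' hna')
      have hmx : a.max' hna = a'.max' hna' := by rw [hee] at hr1; omega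
      have : a = insert (a.max' hna) (e a) := by
        rw [hea, Finset.insert_erase (Finset.max'_mem a hna)]
      rw [this, hee, hmx, hea', Finset.insert_erase (Finset.max'_mem a' hna')]
    · intro s hs
      obtain ⟨hcard, hsum, hsub⟩ := hmem s hs
      have hsne := hne s hs
      rw [Finset.mem_powersetCard]
      constructor
      · simp only [e, dif_pos hsne]
        exact (Finset.erase_subset _ _).trans hsub
      · simp only [e, dif_pos hsne]
        rw [Finset.card_erase_of_mem (Finset.max'_mem s hsne), hcard]
    · intro t _
      have : (0:ℝ) ≤ ∏ k ∈ t, FA A k := Finset.prod_nonneg fun k _ => FA_nonneg k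
      positivity
  rw [← Finset.mul_sum] at hbound
  refine hbound.trans ?_
  have hsum : ∑ t ∈ (Finset.range (n + 1)).powersetCard (h - 1), ∏ k ∈ t, FA A k
      ≤ (K * cntA A n) ^ (h - 1) := by
    refine (powersetCard_sum_prod_le _ _ FA_nonneg (h-1)).trans ?_
    refine pow_le_pow_left₀ (Finset.sum_nonneg fun k _ => FA_nonneg k) ?_ _
    exact hKn
  have hAn : (0:ℝ) ≤ cntA A n := Nat.cast_nonneg _
  have hn0 : (0:ℝ) < n := by exact_mod_cast by omega
  calc h * (cntA A n : ℝ) / n * ∑ t ∈ (Finset.range (n + 1)).powersetCard (h - 1), ∏ k ∈ t, FA A k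
      ≤ h * (cntA A n : ℝ) / n * (K * cntA A n) ^ (h - 1) := by
        refine mul_le_mul_of_nonneg_left hsum (by positivity)
    _ = h * K ^ (h-1) * ((cntA A n : ℝ) ^ (h - 1 + 1) / n) := by
        rw [mul_pow]; ring
    _ = h * K ^ (h-1) * ((cntA A n : ℝ) ^ h / n) := by
        have he : h - 1 + 1 = h := by omega
        rw [he]
end Main

section Lower
variable {A : Set ℕ}

set_option maxHeartbeats 1000000 in
lemma lower_bound (hOR : ORseq A) (h : ℕ) (hh : 2 ≤ h) :
    ∃ c : ℝ, 0 < c ∧ ∀ᶠ n : ℕ in atTop,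
      c * ((cntA A n : ℝ) ^ h / n) ≤
      ∑ s ∈ ((Finset.range (n + 1)).powersetCard h).filter (fun s => ∑ k ∈ s, k = n),
        ∏ k ∈ s, FA A k := by
  classical
  obtain ⟨p, rfl⟩ : ∃ p, h = p + 2 := ⟨h - 2, by omega⟩
  set F2 := 4 * ((p + 2) * (p + 2)) with hF2
  obtain ⟨C₂, hC₂, N₂, hN₂⟩ := or_scale hOR F2 (Nat.one_le_iff_ne_zero.mpr (by rw [hF2]; positivity))
  have hF2R : (0:ℝ) < (F2:ℝ) := by positivity
  refine ⟨((2 * (F2:ℝ)) ^ (p+1) * (2 * C₂) ^ (p+2))⁻¹, by positivity, ?_⟩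
  filter_upwards [eventually_ge_atTop (max N₂ F2), eventually_ge_atTop 1] with n hn hn1
  have hnN₂ : N₂ ≤ n := le_trans (le_max_left _ _) hn
  have hnF2 : F2 ≤ n := le_trans (le_max_right _ _) hn
  set q := n / F2 with hq
  have hF20 : 0 < F2 := by rw [hF2]; positivity
  have hq1 : 1 ≤ q := (Nat.one_le_div_iff hF20).mpr hnF2
  have hq4 : q ≤ n / 4 := by
    rw [hq, hF2, ← Nat.div_div_eq_div_mul]
    exact Nat.div_le_div_right (Nat.div_le_self _ _) |>.trans
      (Nat.div_le_div_left (by nlinarith) (by norm_num))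
  -- definitions
  set kk : (Fin (p+1) → ℕ) → Fin (p+1) → ℕ := fun ε i => ((i:ℕ) + 1) * q + ε i with hkk
  set E := Fintype.piFinset (fun _ : Fin (p+1) => Finset.range q) with hE
  set φ : (Fin (p+1) → ℕ) → Finset ℕ :=
    fun ε => insert (n - ∑ i, kk ε i) (Finset.image (kk ε) Finset.univ) with hφ
  have hmemE : ∀ ε ∈ E, ∀ i, ε i < q := by
    intro ε hε i
    rw [hE, Fintype.mem_piFinset] at hε
    simpa using hε i
  -- basic bounds on kk
  have hkk_lb : ∀ ε, ∀ i : Fin (p+1), q ≤ kk ε i := by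
    intro ε i; rw [hkk]; simp only []; nlinarith [Nat.zero_le (ε i), Nat.zero_le (i:ℕ)]
  have hkk_ub : ∀ ε ∈ E, ∀ i : Fin (p+1), kk ε i < ((i:ℕ) + 2) * q := by
    intro ε hε i
    have := hmemE ε hε i
    rw [hkk]; simp only []; nlinarith
  have hpq : ((p + 2) * (p + 2)) * q ≤ n / 4 := by
    have h1 : q = n / 4 / ((p + 2) * (p + 2)) := by
      rw [hq, hF2, Nat.div_div_eq_div_mul]
    rw [h1, Nat.mul_comm]
    exact Nat.div_mul_le_self _ _
  have hkk4 : ∀ ε ∈ E, ∀ i : Fin (p+1), kk ε i < n / 4 := by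
    intro ε hε i
    have h1 := hkk_ub ε hε i
    have h2 : ((i:ℕ) + 2) * q ≤ ((p + 2) * (p + 2)) * q := by
      have hi : (i:ℕ) ≤ p := by omega
      exact Nat.mul_le_mul_right q (by nlinarith)
    omega
  have hS4 : ∀ ε ∈ E, ∑ i, kk ε i ≤ n / 4 := by
    intro ε hε
    have h1 : ∑ i, kk ε i ≤ (p + 1) * ((p + 2) * q) := by
      have := Finset.sum_le_card_nsmul Finset.univ (kk ε) ((p + 2) * q) ?_
      · simpa [smul_eq_mul] using this
      · intro i _
        have h1 := hkk_ub ε hε i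
        have hi : (i:ℕ) ≤ p := by omega
        have : ((i:ℕ) + 2) * q ≤ (p + 2) * q := Nat.mul_le_mul_right q (by omega)
        omega
    have h2 : (p + 1) * ((p + 2) * q) ≤ ((p + 2) * (p + 2)) * q := by
      rw [← Nat.mul_assoc]
      exact Nat.mul_le_mul_right q (by nlinarith)
    omega
  have hlast_gt : ∀ ε ∈ E, ∀ ε' ∈ E, ∀ i : Fin (p+1), kk ε' i < n - ∑ i, kk ε i := by
    intro ε hε ε' hε' i
    have h1 := hkk4 ε' hε' i
    have h2 := hS4 ε hε
    omega
  have hnotmem : ∀ ε ∈ E, (n - ∑ i, kk ε i) ∉ Finset.image (kk ε) Finset.univ := by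
    intro ε hε hmem
    obtain ⟨i, -, hi⟩ := Finset.mem_image.mp hmem
    exact absurd hi (Nat.ne_of_lt (hlast_gt ε hε ε hε i))
  have hidx : ∀ ε ∈ E, ∀ ε' ∈ E, ∀ i j : Fin (p+1), kk ε i = kk ε' j → i = j := by
    intro ε hε ε' hε' i j hij
    have l1 : ((i:ℕ) + 1) * q ≤ kk ε i := by rw [hkk]; simp
    have l2 : ((j:ℕ) + 1) * q ≤ kk ε' j := by rw [hkk]; simp
    have u1 := hkk_ub ε hε i
    have u2 := hkk_ub ε' hε' j
    have c1 : ((i:ℕ) + 1) * q < ((j:ℕ) + 2) * q := by omega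
    have c2 : ((j:ℕ) + 1) * q < ((i:ℕ) + 2) * q := by omega
    have d1 : (i:ℕ) + 1 < (j:ℕ) + 2 := lt_of_mul_lt_mul_right c1 (Nat.zero_le q)
    have d2 : (j:ℕ) + 1 < (i:ℕ) + 2 := lt_of_mul_lt_mul_right c2 (Nat.zero_le q)
    exact Fin.ext (by omega)
  have hinjkk : ∀ ε ∈ E, Function.Injective (kk ε) := by
    intro ε hε i j hij
    exact hidx ε hε ε hε i j hij
  have hcard : ∀ ε ∈ E, (φ ε).card = p + 2 := by
    intro ε hε
    rw [hφ]
    simp only []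
    rw [Finset.card_insert_of_notMem (hnotmem ε hε),
      Finset.card_image_of_injective _ (hinjkk ε hε), Finset.card_univ, Fintype.card_fin]
  have hsumφ : ∀ ε ∈ E, ∑ k ∈ φ ε, k = n := by
    intro ε hε
    rw [hφ]
    simp only []
    rw [Finset.sum_insert (hnotmem ε hε), Finset.sum_image (fun i _ j _ h => hinjkk ε hε h)]
    have := hS4 ε hε
    omega
  have hsubφ : ∀ ε ∈ E, φ ε ⊆ Finset.range (n + 1) := by
    intro ε hε k hk
    rw [hφ] at hk
    simp only [Finset.mem_insert, Finset.mem_image] at hk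
    rw [Finset.mem_range]
    rcases hk with rfl | ⟨i, -, rfl⟩
    · omega
    · have := hkk4 ε hε i; omega
  have hφP : ∀ ε ∈ E, φ ε ∈ ((Finset.range (n + 1)).powersetCard (p+2)).filter
      (fun s => ∑ k ∈ s, k = n) := by
    intro ε hε
    rw [Finset.mem_filter, Finset.mem_powersetCard]
    exact ⟨⟨hsubφ ε hε, hcard ε hε⟩, hsumφ ε hε⟩
  have hElem : ∀ ε ∈ E, ∀ k ∈ φ ε, q ≤ k ∧ k ≤ n := by
    intro ε hε k hk
    rw [hφ] at hk
    simp only [Finset.mem_insert, Finset.mem_image] at hk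
    have hS := hS4 ε hε
    rcases hk with rfl | ⟨i, -, rfl⟩
    · constructor <;> omega
    · have h1 := hkk_lb ε i
      have h2 := hkk4 ε hε i
      constructor <;> omega
  set c0 : ℝ := (cntA A (q:ℝ) : ℝ) / ((n:ℝ) + 1) with hc0
  have hc0nn : 0 ≤ c0 := by rw [hc0]; positivity
  have hterm : ∀ ε ∈ E, c0 ^ (p + 2) ≤ ∏ k ∈ φ ε, FA A k := by
    intro ε hε
    calc c0 ^ (p + 2) = ∏ _k ∈ φ ε, c0 := by
          rw [Finset.prod_const, hcard ε hε]
      _ ≤ ∏ k ∈ φ ε, FA A k := by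
          refine Finset.prod_le_prod (fun _ _ => hc0nn) ?_
          intro k hk
          obtain ⟨hkq, hkn⟩ := hElem ε hε k hk
          rw [hc0]
          unfold FA
          refine div_le_div₀ (Nat.cast_nonneg _) ?_ (by positivity) ?_
          · exact_mod_cast cntA_mono A (by exact_mod_cast hkq)
          · exact_mod_cast by omega
  have hφinj : ∀ ε ∈ E, ∀ ε' ∈ E, φ ε = φ ε' → ε = ε' := by
    intro ε hε ε' hε' heq
    funext i
    have hmem : kk ε i ∈ φ ε' := by
      rw [← heq, hφ]
      exact Finset.mem_insert_of_mem (Finset.mem_image_of_mem _ (Finset.mem_univ i))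
    rw [hφ] at hmem
    simp only [Finset.mem_insert, Finset.mem_image] at hmem
    rcases hmem with he | ⟨j, -, hj⟩
    · exact absurd he (Nat.ne_of_lt (hlast_gt ε' hε' ε hε i))
    · have hij : j = i := hidx ε' hε' ε hε j i hj
      subst hij
      rw [hkk] at hj
      simp only [] at hj
      omega
  -- assemble
  set P := ((Finset.range (n + 1)).powersetCard (p+2)).filter (fun s => ∑ k ∈ s, k = n) with hP
  have hsubP : E.image φ ⊆ P := Finset.image_subset_iff.mpr (fun ε hε => hφP ε hε)
  have hmono : ∑ s ∈ E.image φ, ∏ k ∈ s, FA A k ≤ ∑ s ∈ P, ∏ k ∈ s, FA A k :=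
    Finset.sum_le_sum_of_subset_of_nonneg hsubP
      (fun s _ _ => Finset.prod_nonneg fun k _ => FA_nonneg k)
  have hcardE : (E.image φ).card = q ^ (p + 1) := by
    rw [Finset.card_image_of_injOn (fun ε hε ε' hε' => hφinj ε hε ε' hε'), hE,
      Fintype.card_piFinset]
    simp [Finset.card_range]
  have hlow : ((q : ℝ) ^ (p + 1)) * c0 ^ (p + 2) ≤ ∑ s ∈ E.image φ, ∏ k ∈ s, FA A k := by
    have := Finset.card_nsmul_le_sum (E.image φ) (fun s => ∏ k ∈ s, FA A k) (c0 ^ (p+2)) ?_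
    · rw [hcardE, nsmul_eq_mul] at this
      exact_mod_cast this
    · intro s hs
      obtain ⟨ε, hε, rfl⟩ := Finset.mem_image.mp hs
      exact hterm ε hε
  refine le_trans ?_ (hmono.trans' hlow)
  -- final real arithmetic
  have haq : (cntA A (n:ℝ) : ℝ) ≤ C₂ * (cntA A (q:ℝ) : ℝ) := hN₂ n hnN₂
  have hNQ : (n : ℝ) ≤ 2 * (F2:ℝ) * (q:ℝ) := by
    have h1 : n < F2 * (q + 1) := Nat.lt_mul_div_succ n hF20
    have h2 : F2 * (q + 1) ≤ F2 * (2 * q) := Nat.mul_le_mul_left F2 (by omega)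
    have : (n:ℝ) < (F2:ℝ) * (2 * (q:ℝ)) := by exact_mod_cast lt_of_lt_of_le h1 h2
    linarith
  have hN1 : (1:ℝ) ≤ (n:ℝ) := by exact_mod_cast hn1
  have hQ0 : (0:ℝ) < (q:ℝ) := by exact_mod_cast hq1
  have hstepA : (cntA A (n:ℝ) : ℝ) / C₂ / (2 * (n:ℝ)) ≤ c0 := by
    rw [hc0, div_div]
    rw [div_le_div_iff₀ (by positivity) (by positivity)]
    have hqnn : (0:ℝ) ≤ (cntA A (q:ℝ) : ℝ) := Nat.cast_nonneg _
    nlinarith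
  have hstepB : (n:ℝ) / (2 * (F2:ℝ)) ≤ (q:ℝ) := by
    rw [div_le_iff₀ (by positivity)]
    nlinarith
  have hfinal : ((2 * (F2:ℝ)) ^ (p+1) * (2 * C₂) ^ (p+2))⁻¹ *
      ((cntA A (n:ℝ) : ℝ) ^ (p+2) / (n:ℝ)) ≤ ((q : ℝ) ^ (p + 1)) * c0 ^ (p + 2) := by
    have e1 : ((n:ℝ) / (2 * (F2:ℝ))) ^ (p+1) ≤ (q:ℝ) ^ (p+1) :=
      pow_le_pow_left₀ (by positivity) hstepB _
    have e2 : ((cntA A (n:ℝ) : ℝ) / C₂ / (2 * (n:ℝ))) ^ (p+2) ≤ c0 ^ (p+2) :=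
      pow_le_pow_left₀ (by positivity) hstepA _
    have e3 : ((n:ℝ) / (2 * (F2:ℝ))) ^ (p+1) *
        ((cntA A (n:ℝ) : ℝ) / C₂ / (2 * (n:ℝ))) ^ (p+2) ≤ (q:ℝ) ^ (p+1) * c0 ^ (p+2) :=
      mul_le_mul e1 e2 (by positivity) (by positivity)
    refine le_trans (le_of_eq ?_) e3
    have hXne : (2 * (F2:ℝ)) ≠ 0 := by positivity
    have hYne : C₂ ≠ 0 := by linarith
    have hNne : (n:ℝ) ≠ 0 := by linarith
    rw [div_div, div_pow, div_pow]
    field_simp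
    ring
  exact hfinal

def ORplus (A : Set ℕ) : Prop := A.Infinite ∧ ORseq A ∧ PIseq A

theorem stmt_5 (A : Set ℕ) (hA : ORplus A) (h : ℕ) (hh : 2 ≤ h) :
    (fun n : ℕ => ∑ s ∈ ((Finset.range (n + 1)).powersetCard h).filter
        (fun s => ∑ k ∈ s, k = n), ∏ k ∈ s, (cntA A k : ℝ) / (k + 1))
      =Θ[atTop] (fun n : ℕ => (cntA A n : ℝ) ^ h / n) := by
  obtain ⟨hI, hOR, hPI⟩ := hA
  obtain ⟨c₁, hc₁, hup⟩ := upper_bound hI hPI h hh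
  obtain ⟨c₂, hc₂, hlo⟩ := lower_bound hOR h hh
  have hfg : ∀ n : ℕ, (∑ s ∈ ((Finset.range (n + 1)).powersetCard h).filter
      (fun s => ∑ k ∈ s, k = n), ∏ k ∈ s, (cntA A k : ℝ) / (k + 1))
      = ∑ s ∈ ((Finset.range (n + 1)).powersetCard h).filter
      (fun s => ∑ k ∈ s, k = n), ∏ k ∈ s, FA A k := by
    intro n; rfl
  have hfnn : ∀ n : ℕ, 0 ≤ ∑ s ∈ ((Finset.range (n + 1)).powersetCard h).filter
      (fun s => ∑ k ∈ s, k = n), ∏ k ∈ s, FA A k :=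
    fun n => Finset.sum_nonneg fun s _ => Finset.prod_nonneg fun k _ => FA_nonneg k
  have hgnn : ∀ n : ℕ, 0 ≤ (cntA A n : ℝ) ^ h / n := fun n => by positivity
  constructor
  · refine IsBigO.of_bound c₁ ?_
    filter_upwards [hup] with n h1
    rw [hfg n, Real.norm_eq_abs, Real.norm_eq_abs, abs_of_nonneg (hfnn n),
      abs_of_nonneg (hgnn n)]
    exact h1
  · refine IsBigO.of_bound c₂⁻¹ ?_
    filter_upwards [hlo] with n h1
    rw [Real.norm_eq_abs, Real.norm_eq_abs, abs_of_nonneg (hgnn n)]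
    rw [hfg n, abs_of_nonneg (hfnn n)]
    rw [inv_mul_eq_div, le_div_iff₀ hc₂, mul_comm]
    exact h1
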